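/- In the group algebra k[C_{n+1}], with t = (−1)^n c, the k-linear map ε' : k[C_{n+1}] → k defined by ε'(Σ_{i=0}^n x_i c^i) = Σ_{i=0}^n (−1)^{ni} x_{n−i} (indices taken in {0,…,n}) is surjective, and its kernel is exactly the image of the k-linear map x ↦ x(1 − t). -/

import Mathlib

universe u

/-- The fixed generator `c` of the cyclic group `C_{n+1}` of order `n+1`
(realized as `Multiplicative (ZMod (n+1))`), viewed in the group algebra `k[C_{n+1}]`. -/
noncomputable def cycGen (k : Type u) [CommRing k] (n : ℕ) :
    MonoidAlgebra k (Multiplicative (ZMod (n + 1))) :=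
  MonoidAlgebra.of k (Multiplicative (ZMod (n + 1))) (Multiplicative.ofAdd (1 : ZMod (n + 1)))

/-- The element `t = (-1)^n c` of the group algebra `k[C_{n+1}]`. -/
noncomputable def tEl (k : Type u) [CommRing k] (n : ℕ) :
    MonoidAlgebra k (Multiplicative (ZMod (n + 1))) :=
  ((-1 : k) ^ n) • cycGen k n

/-- The norm element `N = ∑_{i=0}^{n} tⁱ` of the group algebra `k[C_{n+1}]`. -/
noncomputable def NEl (k : Type u) [CommRing k] (n : ℕ) :
    MonoidAlgebra k (Multiplicative (ZMod (n + 1))) :=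
  ∑ i ∈ Finset.range (n + 1), (tEl k n) ^ i

/-- The `k`-linear map `ε' : k[C_{n+1}] → k` defined by
`ε'(∑_{i=0}^n xᵢ cⁱ) = ∑_{i=0}^n (-1)^{n i} x_{n-i}` (indices taken in `{0, …, n}`). -/
noncomputable def epsPrime (k : Type u) [CommRing k] (n : ℕ) :
    MonoidAlgebra k (Multiplicative (ZMod (n + 1))) →ₗ[k] k :=
  ∑ i ∈ Finset.range (n + 1),
    ((-1 : k) ^ (n * i)) • ((Finsupp.lapply (Multiplicative.ofAdd (((n - i : ℕ) : ZMod (n + 1))))).comp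
      (MonoidAlgebra.coeffLinearEquiv k : MonoidAlgebra k (Multiplicative (ZMod (n + 1))) ≃ₗ[k] _).toLinearMap)

variable {k : Type u} [CommRing k] {n : ℕ}

lemma spow_eq {a b : ℕ} (h : (n * a) % 2 = (n * b) % 2) :
    ((-1 : k) ^ n) ^ a = ((-1 : k) ^ n) ^ b := by
  rw [← pow_mul, ← pow_mul, neg_one_pow_eq_pow_mod_two, h, ← neg_one_pow_eq_pow_mod_two]

lemma tEl_single : tEl k n =
    MonoidAlgebra.single (Multiplicative.ofAdd (1 : ZMod (n + 1))) ((-1 : k) ^ n) := by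
  simp [tEl, cycGen, MonoidAlgebra.of_apply, MonoidAlgebra.smul_single']

lemma tEl_pow (j : ℕ) : (tEl k n) ^ j =
    MonoidAlgebra.single (Multiplicative.ofAdd ((j : ZMod (n + 1)))) (((-1 : k) ^ n) ^ j) := by
  induction j with
  | zero => simp [MonoidAlgebra.one_def]
  | succ m ih =>
      rw [pow_succ, ih, tEl_single, MonoidAlgebra.single_mul_single, ← pow_succ]
      congr 1
      push_cast
      rw [← ofAdd_add]

lemma epsPrime_single (b : ZMod (n + 1)) (x : k) :
    epsPrime k n (MonoidAlgebra.single (Multiplicative.ofAdd b) x)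
      = ((-1 : k) ^ n) ^ (n - b.val) * x := by
  have hb : b.val < n + 1 := ZMod.val_lt b
  rw [epsPrime, LinearMap.sum_apply]
  rw [Finset.sum_eq_single (n - b.val)]
  · have : ((n - (n - b.val) : ℕ) : ZMod (n + 1)) = b := by
      rw [Nat.sub_sub_self (by omega)]
      exact ZMod.natCast_rightInverse b
    rw [this]
    rw [LinearMap.smul_apply]
    simp only [LinearMap.comp_apply, LinearEquiv.coe_coe, MonoidAlgebra.coeffLinearEquiv_apply,
      MonoidAlgebra.coeff_single, Finsupp.lapply_apply]
    rw [Finsupp.single_apply]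
    simp [pow_mul]
  · intro i hi hne
    simp only [Finset.mem_range] at hi
    suffices h : Multiplicative.ofAdd b ≠ Multiplicative.ofAdd ((n - i : ℕ) : ZMod (n + 1)) by
      rw [LinearMap.smul_apply]
      simp only [LinearMap.comp_apply, LinearEquiv.coe_coe, MonoidAlgebra.coeffLinearEquiv_apply,
        MonoidAlgebra.coeff_single, Finsupp.lapply_apply]
      rw [Finsupp.single_apply]
      simp [h]
    intro hEq
    apply hne
    have : b = ((n - i : ℕ) : ZMod (n + 1)) := by exact_mod_cast Multiplicative.ofAdd.injective hEq
    have hv : b.val = n - i := by rw [this, ZMod.val_cast_of_lt (by omega)]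
    omega
  · intro h
    simp only [Finset.mem_range] at h
    omega

lemma single_mul_one_sub_t (b : ZMod (n + 1)) (x : k) :
    MonoidAlgebra.single (Multiplicative.ofAdd b) x * (1 - tEl k n)
      = MonoidAlgebra.single (Multiplicative.ofAdd b) x
        - MonoidAlgebra.single (Multiplicative.ofAdd (b + 1)) (x * (-1 : k) ^ n) := by
  rw [mul_sub, mul_one, tEl_single, MonoidAlgebra.single_mul_single, ← ofAdd_add]

lemma val_add_one_cases (b : ZMod (n + 1)) :
    (b.val = n ∧ (b + 1).val = 0) ∨ (b.val < n ∧ (b + 1).val = b.val + 1) := by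
  have hb : b.val < n + 1 := ZMod.val_lt b
  have hcast : ((b.val : ℕ) : ZMod (n + 1)) = b := ZMod.natCast_rightInverse b
  rcases Nat.lt_or_ge b.val n with h | h
  · right
    refine ⟨h, ?_⟩
    have : b + 1 = ((b.val + 1 : ℕ) : ZMod (n + 1)) := by push_cast [hcast]; ring
    rw [this, ZMod.val_cast_of_lt (by omega)]
  · left
    have hbn : b.val = n := by omega
    have : b + 1 = (((n + 1 : ℕ)) : ZMod (n + 1)) := by
      rw [← hcast, hbn]; push_cast; ring
    rw [this, ZMod.natCast_self]
    exact ⟨hbn, ZMod.val_zero⟩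

lemma epsPrime_single_mul (b : ZMod (n + 1)) (x : k) :
    epsPrime k n (MonoidAlgebra.single (Multiplicative.ofAdd b) x * (1 - tEl k n)) = 0 := by
  have heven : (n * (n + 1)) % 2 = 0 := Nat.even_iff.mp (Nat.even_mul_succ_self n)
  rw [single_mul_one_sub_t, map_sub, epsPrime_single, epsPrime_single]
  rcases val_add_one_cases b with ⟨h1, h2⟩ | ⟨h1, h2⟩
  · rw [h1, h2, Nat.sub_self, Nat.sub_zero]
    have key : ((-1 : k) ^ n) ^ 0 = ((-1 : k) ^ n) ^ n * (-1 : k) ^ n := by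
      rw [← pow_succ]
      exact spow_eq (by omega)
    rw [key]; ring
  · rw [h2]
    have key : ((-1 : k) ^ n) ^ (n - b.val)
        = ((-1 : k) ^ n) ^ (n - (b.val + 1)) * (-1 : k) ^ n := by
      rw [← pow_succ]
      congr 1
      omega
    rw [key]; ring

noncomputable def piMap (k : Type u) [CommRing k] (n : ℕ) :
    MonoidAlgebra k (Multiplicative (ZMod (n + 1))) →ₗ[k]
      MonoidAlgebra k (Multiplicative (ZMod (n + 1))) :=
  (Finsupp.lsum k fun g : Multiplicative (ZMod (n + 1)) => LinearMap.toSpanSingleton k _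
    (-(((-1 : k) ^ n) ^ ((Multiplicative.toAdd g).val) •
        ∑ i ∈ Finset.range (Multiplicative.toAdd g).val, tEl k n ^ i))).comp
    (MonoidAlgebra.coeffLinearEquiv k).toLinearMap

lemma piMap_single (b : ZMod (n + 1)) (x : k) :
    piMap k n (MonoidAlgebra.single (Multiplicative.ofAdd b) x)
      = x • (-(((-1 : k) ^ n) ^ (b.val) • ∑ i ∈ Finset.range b.val, tEl k n ^ i)) := by
  rw [piMap, LinearMap.comp_apply, LinearEquiv.coe_coe, MonoidAlgebra.coeffLinearEquiv_apply,
    MonoidAlgebra.coeff_single]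
  erw [Finsupp.lsum_single]
  rfl

lemma key_single (b : ZMod (n + 1)) (x : k) :
    piMap k n (MonoidAlgebra.single (Multiplicative.ofAdd b) x) * (1 - tEl k n)
      = MonoidAlgebra.single (Multiplicative.ofAdd b) x
        - ((-1 : k) ^ n * epsPrime k n (MonoidAlgebra.single (Multiplicative.ofAdd b) x)) • 1 := by
  have hcast : ((b.val : ℕ) : ZMod (n + 1)) = b := ZMod.natCast_rightInverse b
  have hsq : ((-1 : k) ^ n) ^ b.val * ((-1 : k) ^ n) ^ b.val = 1 := by
    rw [← pow_add]
    have h0 : ((-1 : k) ^ n) ^ (b.val + b.val) = ((-1 : k) ^ n) ^ 0 := spow_eq (by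
      have : n * (b.val + b.val) = 2 * (n * b.val) := by ring
      omega)
    rw [h0, pow_zero]
  have hgeom : (∑ i ∈ Finset.range b.val, tEl k n ^ i) * (1 - tEl k n)
      = 1 - tEl k n ^ b.val := by
    have h1 := geom_sum_mul (tEl k n) b.val
    have h2 : (∑ i ∈ Finset.range b.val, tEl k n ^ i) * (1 - tEl k n)
        = -((∑ i ∈ Finset.range b.val, tEl k n ^ i) * (tEl k n - 1)) := by ring
    rw [h2, h1]; ring
  have hspow : ((-1 : k) ^ n) ^ b.val = (-1 : k) ^ n * ((-1 : k) ^ n) ^ (n - b.val) := by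
    rw [← pow_succ']
    refine spow_eq ?_
    have hb : b.val < n + 1 := ZMod.val_lt b
    have heven : (n * (n + 1)) % 2 = 0 := Nat.even_iff.mp (Nat.even_mul_succ_self n)
    have hsplit : n * (n - b.val + 1) + n * b.val = n * (n + 1) := by
      rw [← Nat.mul_add]
      congr 1
      omega
    have h2 : n * (b.val + b.val) = 2 * (n * b.val) := by ring
    omega
  rw [piMap_single, epsPrime_single, smul_mul_assoc, neg_mul, smul_mul_assoc, hgeom]
  rw [tEl_pow, hcast, smul_sub, MonoidAlgebra.smul_single']
  rw [MonoidAlgebra.one_def]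
  rw [smul_neg, smul_sub, MonoidAlgebra.smul_single, MonoidAlgebra.smul_single]
  rw [neg_sub]
  congr 2
  · rw [hsq, MonoidAlgebra.smul_single', mul_one]
  · rw [MonoidAlgebra.smul_single', mul_one]
    congr 1
    rw [hspow, smul_eq_mul, smul_eq_mul, mul_one]
    ring

lemma key_identity (x : MonoidAlgebra k (Multiplicative (ZMod (n + 1)))) :
    piMap k n x * (1 - tEl k n) = x - ((-1 : k) ^ n * epsPrime k n x) • 1 := by
  induction x using MonoidAlgebra.induction_linear with
  | zero => simp
  | add f g hf hg =>
      rw [map_add, map_add, add_mul, hf, hg, mul_add, add_smul, sub_add_sub_comm]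
  | single g x => exact key_single (Multiplicative.toAdd g) x

lemma epsPrime_mul_one_sub_t (x : MonoidAlgebra k (Multiplicative (ZMod (n + 1)))) :
    epsPrime k n (x * (1 - tEl k n)) = 0 := by
  induction x using MonoidAlgebra.induction_linear with
  | zero => simp
  | add f g hf hg => rw [add_mul, map_add, hf, hg, add_zero]
  | single g x => exact epsPrime_single_mul (Multiplicative.toAdd g) x

/-- The map `ε'` is surjective, and its kernel is exactly the image of right multiplication
by `1 - t`. -/
theorem epsPrime_surjective_ker_eq_range {k : Type u} [CommRing k] (n : ℕ) :
    Function.Surjective (epsPrime k n) ∧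
      LinearMap.ker (epsPrime k n) =
        LinearMap.range (LinearMap.mulRight k (1 - tEl k n)) := by
  constructor
  · intro a
    refine ⟨MonoidAlgebra.single (Multiplicative.ofAdd (0 : ZMod (n + 1)))
      (((-1 : k) ^ n) ^ n * a), ?_⟩
    rw [epsPrime_single, ZMod.val_zero, Nat.sub_zero, ← mul_assoc, ← pow_add]
    have h0 : ((-1 : k) ^ n) ^ (n + n) = ((-1 : k) ^ n) ^ 0 := spow_eq (by
      have : n * (n + n) = 2 * (n * n) := by ring
      omega)
    rw [h0, pow_zero, one_mul]
  · apply le_antisymm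
    · intro x hx
      refine ⟨piMap k n x, ?_⟩
      rw [LinearMap.mulRight_apply, key_identity, LinearMap.mem_ker.mp hx, mul_zero,
        zero_smul, sub_zero]
    · rintro _ ⟨y, rfl⟩
      rw [LinearMap.mem_ker, LinearMap.mulRight_apply]
      exact epsPrime_mul_one_sub_t y
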